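/- Let n ≥ 3 and 2 ≤ k ≤ n−1, and let x₁,…,xₙ be configurations such that every pair appearing as (arrivals, services) in the recursive definitions of all tandem departure maps below has finite queue lengths. Then Dⁿ(x₁,…,xₙ) = Dⁿ( x₁,…,x_{k−1}, R(x_k,x_{k+1}), D(x_k,x_{k+1}), x_{k+2},…,xₙ ) (when k = n−1 the final segment x_{k+2},…,xₙ is empty). -/

import Mathlib

open scoped BigOperators

/-- A particle configuration on `ℤ`: a `{0,1}`-valued function. -/
abbrev Config := ℤ → ℤ

/-- `x` takes only the values `0` and `1`. -/
def IsConfig (x : Config) : Prop := ∀ i, x i = 0 ∨ x i = 1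

/-- `x[i,j] = ∑_{k=i}^j x(k)` (zero if `j < i`). -/
noncomputable def cnt (x : Config) (i j : ℤ) : ℤ := ∑ k ∈ Finset.Icc i j, x k

/-- `(a,s)` has finite queue lengths. -/
def FinQ (a s : Config) : Prop :=
  ∀ i : ℤ, BddAbove {v : ℤ | ∃ j ≤ i, v = cnt a j i - cnt s j i}

/-- The queue length `Q_i(a,s) = sup_{j ≤ i} max(a[j,i] - s[j,i], 0)`. -/
noncomputable def queue (a s : Config) (i : ℤ) : ℤ :=
  sSup {q : ℤ | ∃ j ≤ i, q = max (cnt a j i - cnt s j i) 0}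

/-- The departure configuration `D(a,s)`. -/
noncomputable def dep (a s : Config) : Config := fun i =>
  if s i = 1 ∧ (0 < queue a s (i - 1) ∨ a i = 1) then 1 else 0

/-- The unused-service configuration `U(a,s)`. -/
noncomputable def unusedSrv (a s : Config) : Config := fun i =>
  if s i = 1 ∧ queue a s (i - 1) = 0 ∧ a i = 0 then 1 else 0

/-- `R(a,s)(i) = a(i) + U(a,s)(i)`. -/
noncomputable def Rmap (a s : Config) : Config := fun i => a i + unusedSrv a s i

/-- Truncation: `x_{n,0}(i) = x(i)` for `i ≥ n`, `0` otherwise. -/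
def trunc (x : Config) (n : ℤ) : Config := fun i => if n ≤ i then x i else 0

-- ===== auxiliary lemmas =====

-- ===== auxiliary lemmas =====

lemma cnt_succ (x : Config) {j i : ℤ} (h : j ≤ i) :
    cnt x j i = cnt x j (i-1) + x i := by
  have h1 : Finset.Icc j i = insert i (Finset.Icc j (i-1)) := by
    ext k; simp only [Finset.mem_Icc, Finset.mem_insert]; omega
  rw [cnt, cnt, h1, Finset.sum_insert (by simp only [Finset.mem_Icc]; omega)]
  ring

lemma cnt_self (x : Config) (i : ℤ) : cnt x i i = x i := by
  rw [cnt, Finset.Icc_self, Finset.sum_singleton]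

lemma cnt_empty (x : Config) {j i : ℤ} (h : i < j) : cnt x j i = 0 := by
  rw [cnt, Finset.Icc_eq_empty (by omega), Finset.sum_empty]

lemma cnt_nonneg {x : Config} (hx : ∀ k, 0 ≤ x k) (j i : ℤ) : 0 ≤ cnt x j i :=
  Finset.sum_nonneg fun k _ => hx k

lemma cnt_mono {x y : Config} (h : ∀ k, x k ≤ y k) (j i : ℤ) : cnt x j i ≤ cnt y j i :=
  Finset.sum_le_sum fun k _ => h k

lemma cnt_congr {x y : Config} {j i : ℤ} (h : ∀ k, j ≤ k → k ≤ i → x k = y k) :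
    cnt x j i = cnt y j i :=
  Finset.sum_congr rfl fun k hk => by
    simp only [Finset.mem_Icc] at hk; exact h k hk.1 hk.2

lemma cnt_split (x : Config) {j m i : ℤ} (h1 : j ≤ m + 1) (h2 : m ≤ i) :
    cnt x j i = cnt x j m + cnt x (m+1) i := by
  rw [cnt, cnt, cnt, ← Finset.sum_union (by
    simp only [Finset.disjoint_left, Finset.mem_Icc]; omega)]
  congr 1
  ext k; simp only [Finset.mem_Icc, Finset.mem_union]; omega

lemma queueSet_nonempty (a s : Config) (i : ℤ) :
    {q : ℤ | ∃ j ≤ i, q = max (cnt a j i - cnt s j i) 0}.Nonempty :=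
  ⟨max (cnt a i i - cnt s i i) 0, i, le_refl i, rfl⟩

lemma queueSet_bdd {a s : Config} (h : FinQ a s) (i : ℤ) :
    BddAbove {q : ℤ | ∃ j ≤ i, q = max (cnt a j i - cnt s j i) 0} := by
  obtain ⟨M, hM⟩ := h i
  refine ⟨max M 0, fun q hq => ?_⟩
  obtain ⟨j, hj, rfl⟩ := hq
  have : cnt a j i - cnt s j i ≤ M := hM ⟨j, hj, rfl⟩
  omega

lemma le_queue {a s : Config} (h : FinQ a s) {j i : ℤ} (hj : j ≤ i) :
    max (cnt a j i - cnt s j i) 0 ≤ queue a s i :=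
  le_csSup (queueSet_bdd h i) ⟨j, hj, rfl⟩

lemma queue_le {a s : Config} {i M : ℤ}
    (h : ∀ j ≤ i, max (cnt a j i - cnt s j i) 0 ≤ M) : queue a s i ≤ M :=
  csSup_le (queueSet_nonempty a s i) (fun q hq => by
    obtain ⟨j, hj, rfl⟩ := hq; exact h j hj)

lemma queue_nonneg {a s : Config} (h : FinQ a s) (i : ℤ) : 0 ≤ queue a s i :=
  le_trans (le_max_right _ 0) (le_queue h (le_refl i))

lemma queue_rec {a s : Config} (h : FinQ a s) (i : ℤ) :
    queue a s i = max (queue a s (i-1) + (a i - s i)) 0 := by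
  have hQn : 0 ≤ queue a s (i-1) := queue_nonneg h (i-1)
  apply le_antisymm
  · apply queue_le
    intro j hj
    rcases eq_or_lt_of_le hj with rfl | hj'
    · rw [cnt_self, cnt_self]; omega
    · have hj2 : j ≤ i - 1 := by omega
      have hc : cnt a j (i-1) - cnt s j (i-1) ≤ queue a s (i-1) :=
        le_trans (le_max_left _ _) (le_queue h hj2)
      rw [cnt_succ a hj, cnt_succ s hj]; omega
  · have h1 : queue a s (i-1) + (a i - s i) ≤ queue a s i := by
      have : queue a s (i-1) ≤ queue a s i - (a i - s i) := by
        apply queue_le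
        intro j hj
        have hji : j ≤ i := by omega
        have e1 : max (cnt a j i - cnt s j i) 0 ≤ queue a s i := le_queue h hji
        have e2 : max (cnt a i i - cnt s i i) 0 ≤ queue a s i := le_queue h (le_refl i)
        rw [cnt_succ a hji, cnt_succ s hji] at e1
        rw [cnt_self, cnt_self] at e2
        omega
      omega
    have h2 : (0:ℤ) ≤ queue a s i := queue_nonneg h i
    omega

lemma queue_attained {a s : Config} (h : FinQ a s) (i : ℤ) :
    ∃ j ≤ i, queue a s i = max (cnt a j i - cnt s j i) 0 := by
  set S := {q : ℤ | ∃ j ≤ i, q = max (cnt a j i - cnt s j i) 0} with hS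
  obtain ⟨M, hM⟩ := queueSet_bdd h i
  obtain ⟨lub, hmem, hub⟩ := Int.exists_greatest_of_bdd (P := fun q => q ∈ S)
    ⟨M, fun z hz => hM hz⟩ (queueSet_nonempty a s i)
  have : queue a s i = lub := IsGreatest.csSup_eq ⟨hmem, fun z hz => hub z hz⟩
  obtain ⟨j, hj, rfl⟩ := hmem
  exact ⟨j, hj, this⟩

lemma dep_config (a s : Config) : IsConfig (dep a s) := by
  intro i; unfold dep; split_ifs <;> simp

lemma Rmap_config {a : Config} (ha : IsConfig a) (s : Config) : IsConfig (Rmap a s) := by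
  intro i; unfold Rmap unusedSrv
  rcases ha i with h | h <;> split_ifs with hc <;> simp [h] <;> omega

lemma IsConfig.nonneg {x : Config} (hx : IsConfig x) (k : ℤ) : 0 ≤ x k := by
  rcases hx k with h | h <;> omega

lemma trunc_config {x : Config} (hx : IsConfig x) (n : ℤ) : IsConfig (trunc x n) := by
  intro i; unfold trunc; split_ifs; exacts [hx i, Or.inl rfl]

lemma trunc_le {x : Config} (hx : IsConfig x) (n k : ℤ) : trunc x n k ≤ x k := by
  unfold trunc; split_ifs; exacts [le_refl _, hx.nonneg k]

lemma trunc_zero (x : Config) {n k : ℤ} (h : k < n) : trunc x n k = 0 := by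
  unfold trunc; rw [if_neg (by omega)]

lemma trunc_eq (x : Config) {n k : ℤ} (h : n ≤ k) : trunc x n k = x k := by
  unfold trunc; rw [if_pos h]

lemma cnt_zero_before {x : Config} {n : ℤ} (hx : ∀ k < n, x k = 0) {j i : ℤ}
    (hi : i < n) : cnt x j i = 0 := by
  rw [cnt]; apply Finset.sum_eq_zero
  intro k hk; simp only [Finset.mem_Icc] at hk; exact hx k (by omega)

lemma queue_zero {x s : Config} {n : ℤ} (hx : ∀ k < n, x k = 0)
    (hs : ∀ k, 0 ≤ s k) {i : ℤ} (hi : i < n) : queue x s i = 0 := by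
  have hset : {q : ℤ | ∃ j ≤ i, q = max (cnt x j i - cnt s j i) 0} = {0} := by
    ext q
    simp only [Set.mem_setOf_eq, Set.mem_singleton_iff]
    constructor
    · rintro ⟨j, hj, rfl⟩
      have h1 : cnt x j i = 0 := cnt_zero_before hx hi
      have h2 : 0 ≤ cnt s j i := cnt_nonneg hs j i
      omega
    · rintro rfl
      refine ⟨i, le_refl i, ?_⟩
      have h1 : cnt x i i = 0 := cnt_zero_before hx hi
      have h2 : 0 ≤ cnt s i i := cnt_nonneg hs i i
      omega
  rw [queue, hset, csSup_singleton]

lemma finq_trunc {x s : Config} (hx : IsConfig x) {n : ℤ} (hxz : ∀ k < n, x k = 0)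
    (hs : ∀ k, 0 ≤ s k) : FinQ x s := by
  intro i
  refine ⟨max (cnt x n i) 0, fun v hv => ?_⟩
  obtain ⟨j, hj, rfl⟩ := hv
  have hsn : 0 ≤ cnt s j i := cnt_nonneg hs j i
  have hb : cnt x j i ≤ max (cnt x n i) 0 := by
    rcases le_or_gt n j with hnj | hjn
    · calc cnt x j i ≤ cnt x n i := by
            rw [cnt, cnt]
            apply Finset.sum_le_sum_of_subset_of_nonneg
            · intro k hk; simp only [Finset.mem_Icc] at *; omega
            · intro k _ _; exact hx.nonneg k
        _ ≤ max (cnt x n i) 0 := le_max_left _ _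
    · rcases le_or_gt n i with hni | hin
      · have : cnt x j i = cnt x j (n-1) + cnt x n i := by
          have := cnt_split x (j := j) (m := n-1) (i := i) (by omega) (by omega)
          simpa using this
        have hz : cnt x j (n-1) = 0 := cnt_zero_before hxz (by omega)
        omega
      · have : cnt x j i = 0 := cnt_zero_before hxz hin
        omega
  omega

lemma dep_zero_before {x s : Config} {n : ℤ} (hxz : ∀ k < n, x k = 0)
    (hs : ∀ k, 0 ≤ s k) : ∀ k < n, dep x s k = 0 := by
  intro k hk
  unfold dep
  rw [if_neg]
  rintro ⟨-, h | h⟩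
  · rw [queue_zero hxz hs (by omega)] at h; omega
  · rw [hxz k hk] at h; omega

lemma dep_eq {x s : Config} (hx : IsConfig x) (hs : IsConfig s) (h : FinQ x s) (i : ℤ) :
    dep x s i = x i + queue x s (i-1) - queue x s i := by
  have hrec := queue_rec h i
  have hQn := queue_nonneg h (i-1)
  have hxi := hx i
  have hsi := hs i
  unfold dep
  split_ifs with hc <;> omega

lemma cnt_dep {x s : Config} (hx : IsConfig x) (hs : IsConfig s) (h : FinQ x s)
    (j : ℤ) : ∀ i, j - 1 ≤ i →
    cnt (dep x s) j i = cnt x j i + queue x s (j-1) - queue x s i := by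
  refine Int.le_induction ?_ ?_
  · rw [cnt_empty _ (by omega), cnt_empty _ (by omega)]; ring
  · intro i hi ih
    have hji : j ≤ i + 1 := by omega
    have e1 : cnt (dep x s) j (i+1) = cnt (dep x s) j i + dep x s (i+1) := by
      have := cnt_succ (dep x s) hji; simpa using this
    have e2 : cnt x j (i+1) = cnt x j i + x (i+1) := by
      have := cnt_succ x hji; simpa using this
    have e3 : dep x s (i+1) = x (i+1) + queue x s i - queue x s (i+1) := by
      have := dep_eq hx hs h (i+1); simpa using this
    omega

lemma queue_mono {x' x s : Config} (hle : ∀ k, x' k ≤ x k) (h : FinQ x s) (i : ℤ) :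
    queue x' s i ≤ queue x s i := by
  apply queue_le
  intro j hj
  have h1 : cnt x' j i ≤ cnt x j i := cnt_mono hle j i
  have h2 := le_queue h hj
  omega

lemma queue_diff {x' x s : Config} (hle : ∀ k, x' k ≤ x k) (h : FinQ x s)
    (h' : FinQ x' s) (j : ℤ) : ∀ i, j - 1 ≤ i →
    queue x s i - queue x' s i ≤
      queue x s (j-1) - queue x' s (j-1) + (cnt x j i - cnt x' j i) := by
  refine Int.le_induction ?_ ?_
  · rw [cnt_empty _ (by omega), cnt_empty _ (by omega)]; omega
  · intro i hi ih
    have hji : j ≤ i + 1 := by omega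
    have e1 : cnt x j (i+1) = cnt x j i + x (i+1) := by
      have := cnt_succ x hji; simpa using this
    have e2 : cnt x' j (i+1) = cnt x' j i + x' (i+1) := by
      have := cnt_succ x' hji; simpa using this
    have r1 : queue x s (i+1) = max (queue x s i + (x (i+1) - s (i+1))) 0 := by
      have := queue_rec h (i+1); simpa using this
    have r2 : queue x' s (i+1) = max (queue x' s i + (x' (i+1) - s (i+1))) 0 := by
      have := queue_rec h' (i+1); simpa using this
    have hq' : 0 ≤ queue x' s i := queue_nonneg h' i
    have hm : queue x' s i ≤ queue x s i := queue_mono hle h i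
    have hl := hle (i+1)
    omega

lemma trunc_zero_before (y : Config) (n : ℤ) : ∀ k < n, trunc y n k = 0 :=
  fun k hk => trunc_zero y hk

lemma queue_trunc_stab {y s : Config} (hy : IsConfig y) (hs : ∀ k, 0 ≤ s k)
    (h : FinQ y s) (m : ℤ) :
    ∃ N, ∀ n ≤ N, queue (trunc y n) s m = queue y s m := by
  obtain ⟨j₀, hj₀, hval⟩ := queue_attained h m
  refine ⟨j₀, fun n hn => le_antisymm (queue_mono (trunc_le hy n) h m) ?_⟩
  have hfin : FinQ (trunc y n) s := finq_trunc (trunc_config hy n) (trunc_zero_before y n) hs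
  have hc : cnt (trunc y n) j₀ m = cnt y j₀ m :=
    cnt_congr fun k hk1 _ => trunc_eq y (by omega)
  have := le_queue hfin hj₀
  rw [hc] at this
  omega

lemma dep2_trunc {y s1 s2 : Config} (hy : IsConfig y) (hs1 : IsConfig s1)
    (hs2 : IsConfig s2) (h1 : FinQ y s1) (h2 : FinQ (dep y s1) s2) (i : ℤ) :
    ∃ N, ∀ n ≤ N, dep (dep (trunc y n) s1) s2 i = dep (dep y s1) s2 i := by
  have hfin : ∀ n, FinQ (trunc y n) s1 :=
    fun n => finq_trunc (trunc_config hy n) (trunc_zero_before y n) hs1.nonneg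
  have hdz : ∀ n, ∀ k < n, dep (trunc y n) s1 k = 0 :=
    fun n => dep_zero_before (trunc_zero_before y n) hs1.nonneg
  have hfin2 : ∀ n, FinQ (dep (trunc y n) s1) s2 :=
    fun n => finq_trunc (dep_config _ _) (hdz n) hs2.nonneg
  -- cumulative departures of truncated system are dominated
  have hdom : ∀ n j m, j - 1 ≤ m →
      cnt (dep (trunc y n) s1) j m ≤ cnt (dep y s1) j m := by
    intro n j m hjm
    have e1 := cnt_dep (trunc_config hy n) hs1 (hfin n) j m hjm
    have e2 := cnt_dep hy hs1 h1 j m hjm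
    have e3 := queue_diff (trunc_le hy n) h1 (hfin n) j m hjm
    have e4 : queue (trunc y n) s1 (j-1) ≤ queue y s1 (j-1) :=
      queue_mono (trunc_le hy n) h1 (j-1)
    have e5 : cnt (trunc y n) j m ≤ cnt y j m := cnt_mono (trunc_le hy n) j m
    omega
  -- layer-2 queue is dominated
  have hql : ∀ n m, queue (dep (trunc y n) s1) s2 m ≤ queue (dep y s1) s2 m := by
    intro n m
    apply queue_le
    intro j hj
    have := hdom n j m (by omega)
    have := le_queue h2 hj
    omega
  -- attainment for layer-2 queue at i-1
  obtain ⟨j₁, hj₁, hval₁⟩ := queue_attained h2 (i-1)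
  obtain ⟨Na, hNa⟩ := queue_trunc_stab hy hs1.nonneg h1 (j₁ - 1)
  obtain ⟨Nb, hNb⟩ := queue_trunc_stab hy hs1.nonneg h1 (i-1)
  refine ⟨min (min Na Nb) (min j₁ i), fun n hn => ?_⟩
  simp only [le_min_iff] at hn
  obtain ⟨⟨hna, hnb⟩, hnj, hni⟩ := hn
  -- layer-2 queue equality at i-1
  have hq2eq : queue (dep (trunc y n) s1) s2 (i-1) = queue (dep y s1) s2 (i-1) := by
    refine le_antisymm (hql n (i-1)) ?_
    have e1 := cnt_dep (trunc_config hy n) hs1 (hfin n) j₁ (i-1) (by omega)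
    have e2 := cnt_dep hy hs1 h1 j₁ (i-1) (by omega)
    have e3 : cnt (trunc y n) j₁ (i-1) = cnt y j₁ (i-1) :=
      cnt_congr fun k hk1 _ => trunc_eq y (by omega)
    have e4 := hNa n hna
    have e5 := hNb n hnb
    have e6 : cnt (dep (trunc y n) s1) j₁ (i-1) = cnt (dep y s1) j₁ (i-1) := by omega
    have e7 := le_queue (hfin2 n) hj₁
    rw [e6] at e7
    omega
  -- layer-1 departure equality at i
  have hdeq : dep (trunc y n) s1 i = dep y s1 i := by
    unfold dep
    rw [hNb n hnb, trunc_eq y hni]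
  -- conclude
  have d1 : dep (dep (trunc y n) s1) s2 i = if s2 i = 1 ∧
      (0 < queue (dep (trunc y n) s1) s2 (i-1) ∨ dep (trunc y n) s1 i = 1)
      then 1 else 0 := rfl
  have d2 : dep (dep y s1) s2 i = if s2 i = 1 ∧
      (0 < queue (dep y s1) s2 (i-1) ∨ dep y s1 i = 1) then 1 else 0 := rfl
  rw [d1, d2, hq2eq, hdeq]

lemma ite_char (c : Prop) [Decidable c] (v : ℤ) (h : v = ite c 1 0) :
    (v = 1 ∧ c) ∨ (v = 0 ∧ ¬ c) := by
  by_cases hc : c <;> simp [hc] at h <;> simp [hc, h]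

set_option maxHeartbeats 2000000 in
lemma key_step (xi ai bi q1 q2 t1 t2 qab q1' q2' t1' t2' qab' di ri dabi dti oi oi' : ℤ)
 (hxi : xi = 0 ∨ xi = 1) (hai : ai = 0 ∨ ai = 1) (hbi : bi = 0 ∨ bi = 1)
 (hq1n : 0 ≤ q1) (hq2n : 0 ≤ q2) (ht1n : 0 ≤ t1) (ht2n : 0 ≤ t2) (hqabn : 0 ≤ qab)
 (inv1 : t1 + t2 = q1 + q2) (inv2 : t1 ≤ q1) (inv3 : q2 ≤ qab) (inv4 : t1 = q1 ∨ q2 = qab)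
 (hdi : di = if ai = 1 ∧ (0 < q1 ∨ xi = 1) then 1 else 0)
 (hri : ri = ai + (if bi = 1 ∧ qab = 0 ∧ ai = 0 then 1 else 0))
 (hdabi : dabi = if bi = 1 ∧ (0 < qab ∨ ai = 1) then 1 else 0)
 (hdti : dti = if ri = 1 ∧ (0 < t1 ∨ xi = 1) then 1 else 0)
 (hq1' : q1' = max (q1 + (xi - ai)) 0)
 (hq2' : q2' = max (q2 + (di - bi)) 0)
 (ht1' : t1' = max (t1 + (xi - ri)) 0)
 (ht2' : t2' = max (t2 + (dti - dabi)) 0)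
 (hqab' : qab' = max (qab + (ai - bi)) 0)
 (hoi : oi = if bi = 1 ∧ (0 < q2 ∨ di = 1) then 1 else 0)
 (hoi' : oi' = if dabi = 1 ∧ (0 < t2 ∨ dti = 1) then 1 else 0) :
 (t1' + t2' = q1' + q2' ∧ t1' ≤ q1' ∧ q2' ≤ qab' ∧ (t1' = q1' ∨ q2' = qab')) ∧ oi = oi' := by
  have hri2 : ri - ai = (if bi = 1 ∧ qab = 0 ∧ ai = 0 then (1:ℤ) else 0) := by
    rw [hri]; ring
  clear hri
  rcases hxi with rfl|rfl <;> rcases hai with rfl|rfl <;> rcases hbi with rfl|rfl <;>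
    norm_num at hdi hri2 hdabi hdti hoi hoi' <;>
    split_ifs at * <;> omega


lemma interchange_trunc {x a b : Config} {n : ℤ} (hx : IsConfig x)
    (hxz : ∀ k < n, x k = 0) (ha : IsConfig a) (hb : IsConfig b) (hab : FinQ a b) :
    dep (dep x a) b = dep (dep x (Rmap a b)) (dep a b) := by
  have hr : IsConfig (Rmap a b) := Rmap_config ha b
  have hdab : IsConfig (dep a b) := dep_config a b
  have f1 : FinQ x a := finq_trunc hx hxz ha.nonneg
  have f2 : FinQ (dep x a) b :=
    finq_trunc (dep_config _ _) (dep_zero_before hxz ha.nonneg) hb.nonneg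
  have f3 : FinQ x (Rmap a b) := finq_trunc hx hxz hr.nonneg
  have f4 : FinQ (dep x (Rmap a b)) (dep a b) :=
    finq_trunc (dep_config _ _) (dep_zero_before hxz hr.nonneg) hdab.nonneg
  set P : ℤ → Prop := fun i =>
    queue x (Rmap a b) i + queue (dep x (Rmap a b)) (dep a b) i
        = queue x a i + queue (dep x a) b i ∧
    queue x (Rmap a b) i ≤ queue x a i ∧
    queue (dep x a) b i ≤ queue a b i ∧
    (queue x (Rmap a b) i = queue x a i ∨ queue (dep x a) b i = queue a b i) with hP
  have step : ∀ i, P (i-1) → P i ∧ dep (dep x a) b i = dep (dep x (Rmap a b)) (dep a b) i := by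
    intro i hPi
    obtain ⟨i1, i2, i3, i4⟩ := hPi
    have K := key_step (x i) (a i) (b i)
      (queue x a (i-1)) (queue (dep x a) b (i-1))
      (queue x (Rmap a b) (i-1)) (queue (dep x (Rmap a b)) (dep a b) (i-1))
      (queue a b (i-1))
      (queue x a i) (queue (dep x a) b i)
      (queue x (Rmap a b) i) (queue (dep x (Rmap a b)) (dep a b) i) (queue a b i)
      (dep x a i) (Rmap a b i) (dep a b i) (dep x (Rmap a b) i)
      (dep (dep x a) b i) (dep (dep x (Rmap a b)) (dep a b) i)
      (hx i) (ha i) (hb i)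
      (queue_nonneg f1 _) (queue_nonneg f2 _) (queue_nonneg f3 _) (queue_nonneg f4 _)
      (queue_nonneg hab _)
      i1 i2 i3 i4
      rfl rfl rfl rfl
      (queue_rec f1 i) (queue_rec f2 i) (queue_rec f3 i) (queue_rec f4 i)
      (queue_rec hab i)
      rfl rfl
    exact ⟨⟨K.1.1, K.1.2.1, K.1.2.2.1, K.1.2.2.2⟩, K.2⟩
  have base : ∀ i, i < n → P i := by
    intro i hi
    have z1 : queue x a i = 0 := queue_zero hxz ha.nonneg hi
    have z2 : queue (dep x a) b i = 0 :=
      queue_zero (dep_zero_before hxz ha.nonneg) hb.nonneg hi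
    have z3 : queue x (Rmap a b) i = 0 := queue_zero hxz hr.nonneg hi
    have z4 : queue (dep x (Rmap a b)) (dep a b) i = 0 :=
      queue_zero (dep_zero_before hxz hr.nonneg) hdab.nonneg hi
    have z5 := queue_nonneg hab i
    exact ⟨by omega, by omega, by omega, Or.inl (by omega)⟩
  have Pall : ∀ i, P i := by
    intro i
    rcases le_or_gt n i with h | h
    · have H : ∀ m, n - 1 ≤ m → P m := by
        refine Int.le_induction (base (n-1) (by omega)) ?_
        intro m hm ih
        exact (step (m+1) (by rw [show m+1-1 = m by ring]; exact ih)).1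
      exact H i (by omega)
    · exact base i h
  funext i
  exact (step i (Pall (i-1))).2

lemma interchange {y a b : Config} (hy : IsConfig y) (ha : IsConfig a) (hb : IsConfig b)
    (hab : FinQ a b) (h1 : FinQ y a) (h2 : FinQ (dep y a) b)
    (h3 : FinQ y (Rmap a b)) (h4 : FinQ (dep y (Rmap a b)) (dep a b)) :
    dep (dep y a) b = dep (dep y (Rmap a b)) (dep a b) := by
  funext i
  obtain ⟨N1, hN1⟩ := dep2_trunc hy ha hb h1 h2 i
  obtain ⟨N2, hN2⟩ := dep2_trunc hy (Rmap_config ha b) (dep_config a b) h3 h4 i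
  set n := min N1 N2
  rw [← hN1 n (min_le_left _ _), ← hN2 n (min_le_right _ _)]
  exact congrFun (interchange_trunc (trunc_config hy n) (trunc_zero_before y n) ha hb hab) i


/-- Left-peeling tandem queue: `Dtandem x [s₁,…,s_k] = D(…D(D(x,s₁),s₂)…,s_k)`. -/
noncomputable def Dtandem : Config → List Config → Config
  | x, [] => x
  | x, s :: rest => Dtandem (dep x s) rest

/-- `DtandemList [x₁,…,xₙ] = Dⁿ(x₁,…,xₙ)`. -/
noncomputable def DtandemList : List Config → Config
  | [] => fun _ => 0
  | x :: rest => Dtandem x rest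

/-- `DtandemN x = Dⁿ(x 0, …, x (n-1))`. -/
noncomputable def DtandemN {n : ℕ} (x : Fin n → Config) : Config :=
  DtandemList (List.ofFn x)

/-- Every pair appearing as (arrivals, services) in the recursive definition of the
tandem departure map has finite queue lengths. -/
def TandemFinQ : List Config → Prop
  | [] => True
  | [_] => True
  | x :: s :: rest => FinQ x s ∧ TandemFinQ (dep x s :: rest)
  termination_by l => l.length

lemma tandemFinQ_cons {x s : Config} {rest : List Config} :
    TandemFinQ (x :: s :: rest) ↔ FinQ x s ∧ TandemFinQ (dep x s :: rest) := by
  rw [TandemFinQ]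

lemma Dtandem_cons (x s : Config) (rest : List Config) :
    Dtandem x (s :: rest) = Dtandem (dep x s) rest := rfl

lemma Dtandem_config : ∀ (l : List Config) (x : Config), IsConfig x → IsConfig (Dtandem x l)
  | [], x, hx => hx
  | s :: rest, x, hx => Dtandem_config rest (dep x s) (dep_config x s)

lemma Dtandem_append (l1 l2 : List Config) : ∀ x : Config,
    Dtandem x (l1 ++ l2) = Dtandem (Dtandem x l1) l2 := by
  induction l1 with
  | nil => intro x; rfl
  | cons s r ih => intro x; simp only [List.cons_append, Dtandem_cons]; exact ih (dep x s)

lemma tandem_peel : ∀ (p' : List Config) (x : Config) (l : List Config),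
    TandemFinQ (x :: (p' ++ l)) → TandemFinQ (Dtandem x p' :: l)
  | [], x, l, h => h
  | s :: p'', x, l, h => by
    rw [List.cons_append] at h
    rw [tandemFinQ_cons] at h
    exact tandem_peel p'' (dep x s) l h.2

/-- Interchangeability: for `n ≥ 3` and `2 ≤ k ≤ n−1` (here the list
`p` of configurations before position `k` is nonempty, `a, b` sit at positions `k, k+1`,
and `q` is the remaining, possibly empty, tail),
`Dⁿ(x₁,…,xₙ) = Dⁿ(x₁,…,x_{k−1}, R(x_k,x_{k+1}), D(x_k,x_{k+1}), x_{k+2},…,xₙ)`. -/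
theorem stmt12 (p q : List Config) (a b : Config) (hp : p ≠ [])
    (hconf : ∀ c ∈ p ++ a :: b :: q, IsConfig c)
    (hab : FinQ a b)
    (h1 : TandemFinQ (p ++ a :: b :: q))
    (h2 : TandemFinQ (p ++ Rmap a b :: dep a b :: q)) :
    DtandemList (p ++ a :: b :: q) = DtandemList (p ++ Rmap a b :: dep a b :: q) := by
  obtain ⟨x, p', rfl⟩ : ∃ x p', p = x :: p' := by
    cases p with
    | nil => exact absurd rfl hp
    | cons x p' => exact ⟨x, p', rfl⟩
  have hxc : IsConfig x := hconf x (by simp)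
  have ha : IsConfig a := hconf a (by simp)
  have hb : IsConfig b := hconf b (by simp)
  set y := Dtandem x p' with hy
  have hyc : IsConfig y := Dtandem_config p' x hxc
  -- extract FinQ facts
  have H1 : TandemFinQ (y :: a :: b :: q) := tandem_peel p' x (a :: b :: q) (by simpa using h1)
  have H2 : TandemFinQ (y :: Rmap a b :: dep a b :: q) :=
    tandem_peel p' x (Rmap a b :: dep a b :: q) (by simpa using h2)
  rw [tandemFinQ_cons] at H1 H2
  obtain ⟨f1, H1'⟩ := H1
  rw [tandemFinQ_cons] at H1'
  obtain ⟨f2, -⟩ := H1'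
  obtain ⟨f3, H2'⟩ := H2
  rw [tandemFinQ_cons] at H2'
  obtain ⟨f4, -⟩ := H2'
  have key := interchange hyc ha hb hab f1 f2 f3 f4
  show Dtandem x (p' ++ a :: b :: q) = Dtandem x (p' ++ Rmap a b :: dep a b :: q)
  rw [Dtandem_append, Dtandem_append, ← hy]
  show Dtandem (dep (dep y a) b) q = Dtandem (dep (dep y (Rmap a b)) (dep a b)) q
  rw [key]
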